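/- Suppose for two nondecreasing execution sequences E and E' and for every B ≥ 1 we have JR_{ℓ_B}(E) ≤ c · JR_{ℓ_B}(E'), where ℓ_B(d) = min(1,d/B) and c > 0. Then for every nonnegative nondecreasing concave ℓ : ℕ → ℝ with ℓ(0) = 0 and all gaps of E and E' bounded by N, JR_ℓ(E) ≤ c · JR_ℓ(E'). -/
import Mathlib


open Finset

private lemma min_cast_eq (d b : ℕ) (hb : 1 ≤ b) :
    ((min d b : ℕ) : ℝ) = (b : ℝ) * min 1 ((d : ℝ) / b) := by
  have hb0 : (b : ℝ) ≠ 0 := Nat.cast_ne_zero.mpr (by omega)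
  rw [Nat.cast_min, mul_min_of_nonneg _ _ (by positivity), mul_one,
    mul_div_cancel₀ _ hb0, min_comm]

private lemma rep_lemma (ℓ : ℕ → ℝ) (h0 : ℓ 0 = 0) :
    ∀ M, 1 ≤ M → ∀ d : ℕ,
      ∑ B ∈ Icc 1 M, (if B = M then ℓ M - ℓ (M - 1)
          else (ℓ B - ℓ (B - 1)) - (ℓ (B + 1) - ℓ B)) * ((min d B : ℕ) : ℝ)
        = ℓ (min d M) := by
  intro M
  induction M with
  | zero => omega
  | succ M ih =>
    intro _ d
    rcases Nat.eq_zero_or_pos M with hM | hM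
    · subst hM
      simp only [Nat.zero_add]
      rw [Finset.Icc_self, Finset.sum_singleton, if_pos rfl]
      rcases Nat.eq_zero_or_pos d with hd | hd
      · subst hd; simp [h0]
      · rw [min_eq_right hd]
        simp [h0]
    · rw [Finset.sum_Icc_succ_top (by omega)]
      have key : ∑ B ∈ Icc 1 M, (if B = M + 1 then ℓ (M + 1) - ℓ (M + 1 - 1)
            else (ℓ B - ℓ (B - 1)) - (ℓ (B + 1) - ℓ B)) * ((min d B : ℕ) : ℝ)
          = ∑ B ∈ Icc 1 M,
            ((if B = M then ℓ M - ℓ (M - 1)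
              else (ℓ B - ℓ (B - 1)) - (ℓ (B + 1) - ℓ B)) * ((min d B : ℕ) : ℝ)
              - if B = M then (ℓ (M + 1) - ℓ M) * ((min d M : ℕ) : ℝ) else 0) := by
        apply Finset.sum_congr rfl
        intro B hB
        rw [Finset.mem_Icc] at hB
        by_cases hBM : B = M
        · subst hBM
          rw [if_neg (by omega), if_pos rfl, if_pos rfl]
          ring
        · rw [if_neg (by omega), if_neg hBM, if_neg hBM]
          ring
      rw [key, Finset.sum_sub_distrib, Finset.sum_ite_eq' (Icc 1 M) M,
        if_pos (Finset.mem_Icc.mpr ⟨hM, le_refl M⟩), ih hM d, if_pos rfl,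
        Nat.add_sub_cancel]
      rcases le_or_gt d M with hd | hd
      · have h1 : min d M = d := min_eq_left hd
        have h2 : min d (M + 1) = d := min_eq_left (by omega)
        rw [h1, h2]
        ring
      · have h1 : min d M = M := min_eq_right (by omega)
        have h2 : min d (M + 1) = M + 1 := min_eq_right (by omega)
        rw [h1, h2]
        push_cast
        ring

private lemma jr_expand (ℓ : ℕ → ℝ) (h0 : ℓ 0 = 0) (M : ℕ) (hM : 1 ≤ M)
    (m : ℕ) (g : ℕ → ℕ) (hg : ∀ k, k < m → 1 ≤ g k ∧ g k ≤ M) :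
    ∑ k ∈ Finset.range m, ℓ (g k)
      = ∑ B ∈ Icc 1 M,
          ((if B = M then ℓ M - ℓ (M - 1)
            else (ℓ B - ℓ (B - 1)) - (ℓ (B + 1) - ℓ B)) * (B : ℝ))
          * ∑ k ∈ Finset.range m, min 1 ((g k : ℝ) / B) := by
  have step : ∀ k ∈ Finset.range m,
      ℓ (g k) = ∑ B ∈ Icc 1 M,
        ((if B = M then ℓ M - ℓ (M - 1)
          else (ℓ B - ℓ (B - 1)) - (ℓ (B + 1) - ℓ B)) * (B : ℝ))
          * min 1 ((g k : ℝ) / B) := by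
    intro k hk
    rw [Finset.mem_range] at hk
    have hrep := rep_lemma ℓ h0 M hM (g k)
    rw [min_eq_left (hg k hk).2] at hrep
    rw [← hrep]
    apply Finset.sum_congr rfl
    intro B hB
    rw [Finset.mem_Icc] at hB
    rw [min_cast_eq _ _ hB.1]
    ring
  rw [Finset.sum_congr rfl step, Finset.sum_comm]
  apply Finset.sum_congr rfl
  intro B _
  rw [Finset.mul_sum]

/-- If for every block size `B ≥ 1` the LoR cost of `E` under `ℓ_B` is at most
`c` times that of `E'`, then for every nonnegative nondecreasing concave locality
function `ℓ` with `ℓ 0 = 0` (and all gaps of `E`, `E'` in `[1, N)`),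
`JR_ℓ(E) ≤ c · JR_ℓ(E')`. -/
theorem dominance_transfer (N n n' : ℕ) (c : ℝ) (hc : 0 < c)
    (e e' : ℕ → ℕ) (he : Monotone e) (he' : Monotone e')
    (hgaps : ∀ k, k < n - 1 → 1 ≤ e (k + 1) - e k ∧ e (k + 1) - e k < N)
    (hgaps' : ∀ k, k < n' - 1 → 1 ≤ e' (k + 1) - e' k ∧ e' (k + 1) - e' k < N)
    (hdom : ∀ B : ℕ, 1 ≤ B →
      (∑ k ∈ Finset.range (n - 1), min 1 (((e (k + 1) - e k : ℕ) : ℝ) / B))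
        ≤ c * ∑ k ∈ Finset.range (n' - 1), min 1 (((e' (k + 1) - e' k : ℕ) : ℝ) / B)) :
    ∀ ℓ : ℕ → ℝ, (∀ i, 0 ≤ ℓ i) → Monotone ℓ → ℓ 0 = 0 →
      (∀ i, 1 ≤ i → ℓ (i + 1) + ℓ (i - 1) ≤ 2 * ℓ i) →
      (∑ k ∈ Finset.range (n - 1), ℓ (e (k + 1) - e k))
        ≤ c * ∑ k ∈ Finset.range (n' - 1), ℓ (e' (k + 1) - e' k) := by
  intro ℓ hpos hmono h0 hconc
  by_cases hn : n - 1 = 0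
  · rw [hn]
    simp only [Finset.range_zero, Finset.sum_empty]
    have : 0 ≤ ∑ k ∈ Finset.range (n' - 1), ℓ (e' (k + 1) - e' k) :=
      Finset.sum_nonneg fun k _ => hpos _
    positivity
  · have hN : 2 ≤ N := by
      obtain ⟨h1, h2⟩ := hgaps 0 (by omega)
      omega
    set M := N - 1 with hMdef
    have hM1 : 1 ≤ M := by omega
    have hcoef : ∀ B ∈ Icc 1 M,
        0 ≤ (if B = M then ℓ M - ℓ (M - 1)
          else (ℓ B - ℓ (B - 1)) - (ℓ (B + 1) - ℓ B)) * (B : ℝ) := by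
      intro B hB
      rw [Finset.mem_Icc] at hB
      apply mul_nonneg _ (by positivity)
      by_cases hBM : B = M
      · rw [if_pos hBM]
        have := hmono (Nat.sub_le M 1)
        linarith
      · rw [if_neg hBM]
        have := hconc B hB.1
        linarith
    rw [jr_expand ℓ h0 M hM1 (n - 1) _ (fun k hk => ⟨(hgaps k hk).1, by
        have := (hgaps k hk).2; omega⟩),
      jr_expand ℓ h0 M hM1 (n' - 1) _ (fun k hk => ⟨(hgaps' k hk).1, by
        have := (hgaps' k hk).2; omega⟩)]
    rw [Finset.mul_sum]
    apply Finset.sum_le_sum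
    intro B hB
    have hB1 := (Finset.mem_Icc.mp hB).1
    have := mul_le_mul_of_nonneg_left (hdom B hB1) (hcoef B hB)
    linarith
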